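/- Let f₀ : (a,b) → ℝ be continuous and let (f₀, …, f_N) be a Sturm sequence for f₀ in (a,b). Then for a < c < d < b, the number of distinct real zeros of f₀ in the interval (c, d] equals v(f, c) − v(f, d), where v(f, x) is the number of sign variations in the tuple (f₀(x), …, f_N(x)). -/

import Mathlib

/-- Number of sign variations of a tuple of reals (zeros removed). -/
noncomputable def signVar (l : List ℝ) : ℕ :=
  let l' := l.filter (fun x => decide (x ≠ 0))
  (l'.zip l'.tail).countP (fun q => decide (q.1 * q.2 < 0))

/-- Heindel's notion of a Sturm sequence for `f 0` on `(a,b)`. -/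
def IsSturmSequence (a b : ℝ) (N : ℕ) (f : ℕ → ℝ → ℝ) : Prop :=
  (∀ i ≤ N, ContinuousOn (f i) (Set.Ioo a b)) ∧
  (∀ y ∈ Set.Ioo a b, f 0 y = 0 →
    ∃ ε > 0, Set.Ioo (y - ε) (y + ε) ⊆ Set.Ioo a b ∧
      (∀ x ∈ Set.Ioo (y - ε) (y + ε), x ≠ y → f 1 x ≠ 0) ∧
      (∀ x, y - ε < x → x < y → f 0 x * f 1 x < 0) ∧
      (∀ x, y < x → x < y + ε → f 0 x * f 1 x > 0)) ∧
  (∀ i, 1 ≤ i → i + 1 ≤ N → ∀ x ∈ Set.Ioo a b, f i x = 0 →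
      f (i - 1) x * f (i + 1) x < 0) ∧
  (∀ x ∈ Set.Ioo a b, f N x ≠ 0)

lemma signVar_filter_eq {l₁ l₂ : List ℝ}
    (h : l₁.filter (fun x => decide (x ≠ 0)) = l₂.filter (fun x => decide (x ≠ 0))) :
    signVar l₁ = signVar l₂ := by
  simp only [signVar, h]

lemma signVar_nil : signVar [] = 0 := rfl

lemma signVar_singleton (a : ℝ) : signVar [a] = 0 := by
  by_cases h : a = 0 <;> simp [signVar, h]

lemma signVar_zero_cons (l : List ℝ) : signVar (0::l) = signVar l := by
  apply signVar_filter_eq; simp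

lemma signVar_cons_zero_cons (a : ℝ) (l : List ℝ) : signVar (a::0::l) = signVar (a::l) := by
  apply signVar_filter_eq; simp [List.filter_cons]

lemma signVar_cons_cons {a b : ℝ} (ha : a ≠ 0) (hb : b ≠ 0) (l : List ℝ) :
    signVar (a::b::l) = (if a*b < 0 then 1 else 0) + signVar (b::l) := by
  have hf2 : (b::l).filter (fun x => decide (x ≠ 0)) = b :: l.filter (fun x => decide (x ≠ 0)) := by
    simp [List.filter_cons, hb]
  have hf1 : (a::b::l).filter (fun x => decide (x ≠ 0))
      = a :: b :: l.filter (fun x => decide (x ≠ 0)) := by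
    simp [List.filter_cons, ha, hb]
  simp only [signVar, hf1, hf2]
  rw [show ((a :: b :: List.filter (fun x => decide (x ≠ 0)) l).zip
      (a :: b :: List.filter (fun x => decide (x ≠ 0)) l).tail) =
      (a, b) :: ((b :: List.filter (fun x => decide (x ≠ 0)) l).zip
        (b :: List.filter (fun x => decide (x ≠ 0)) l).tail) by
    simp [List.zip]]
  rw [List.countP_cons]
  by_cases h : a*b < 0 <;> simp [h, add_comm]

/-- Admissible sign sequences: head and last nonzero, zeros isolated with opposite neighbors. -/
inductive Adm : List ℝ → Prop
  | single {a : ℝ} : a ≠ 0 → Adm [a]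
  | cons {a b : ℝ} {t : List ℝ} : a ≠ 0 → b ≠ 0 → Adm (b::t) → Adm (a::b::t)
  | consZero {a c : ℝ} {t : List ℝ} : a ≠ 0 → a * c < 0 → Adm (c::t) → Adm (a::0::c::t)

lemma shift_sign {a a' : ℝ} {l l' : List ℝ}
    (h : ∀ i (hi : i < (a::l).length) (hi' : i < (a'::l').length),
      (a::l)[i] ≠ 0 → 0 < (a::l)[i] * (a'::l')[i]) :
    ∀ i (hi : i < l.length) (hi' : i < l'.length), l[i] ≠ 0 → 0 < l[i] * l'[i] := by
  intro i hi hi' hne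
  have := h (i+1) (by simpa using Nat.succ_lt_succ hi) (by simpa using Nat.succ_lt_succ hi')
  simpa using this hne

lemma signVar_eq_of_adm : ∀ {u : List ℝ}, Adm u → ∀ {w : List ℝ}, u.length = w.length →
    (∀ i (hi : i < u.length) (hi' : i < w.length), u[i] ≠ 0 → 0 < u[i] * w[i]) →
    signVar w = signVar u := by
  intro u hu
  induction hu with
  | @single a ha =>
    intro w hlen hsgn
    match w with
    | [a'] => rw [signVar_singleton, signVar_singleton]
  | @cons a b t ha hb hadm ih =>
    intro w hlen hsgn
    match w, hlen with
    | a'::b'::t', hlen =>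
      have haa : 0 < a * a' := hsgn 0 (by simp) (by simp) ha
      have hbb : 0 < b * b' := hsgn 1 (by simp) (by simp) hb
      have ha' : a' ≠ 0 := by rintro rfl; simp at haa
      have hb' : b' ≠ 0 := by rintro rfl; simp at hbb
      rw [signVar_cons_cons ha' hb', signVar_cons_cons ha hb,
        ih (by simpa using hlen) (shift_sign hsgn)]
      congr 1
      by_cases h : a * b < 0
      · rw [if_pos h, if_pos (by nlinarith)]
      · push_neg at h
        have : 0 < a * b := lt_of_le_of_ne h (by intro he; exact ha (by
          rcases mul_eq_zero.mp he.symm with h1 | h1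
          · exact h1
          · exact absurd h1 hb))
        rw [if_neg (by nlinarith), if_neg (by push_neg; exact h)]
  | @consZero a c t ha hac hadm ih =>
    intro w hlen hsgn
    match w, hlen with
    | a'::b'::c'::t', hlen =>
      have hc : c ≠ 0 := by rintro rfl; simp at hac
      have haa : 0 < a * a' := hsgn 0 (by simp) (by simp) ha
      have hcc : 0 < c * c' := hsgn 2 (by simp) (by simp) hc
      have ha' : a' ≠ 0 := by rintro rfl; simp at haa
      have hc' : c' ≠ 0 := by rintro rfl; simp at hcc
      have hac' : a' * c' < 0 := by nlinarith
      have hIH : signVar (c'::t') = signVar (c::t) := by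
        apply ih (by simpa using hlen)
        intro i hi hi' hne
        have := hsgn (i+2) (by simpa using Nat.succ_lt_succ (Nat.succ_lt_succ hi))
          (by simpa using Nat.succ_lt_succ (Nat.succ_lt_succ hi'))
        simpa using this hne
      have hRHS : signVar (a::0::c::t) = 1 + signVar (c::t) := by
        rw [signVar_cons_zero_cons, signVar_cons_cons ha hc, if_pos hac]
      by_cases hb' : b' = 0
      · subst hb'
        rw [signVar_cons_zero_cons, signVar_cons_cons ha' hc', if_pos hac', hIH, hRHS]
      · rw [signVar_cons_cons ha' hb', signVar_cons_cons hb' hc', hIH, hRHS, ← add_assoc]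
        congr 1
        rcases lt_trichotomy b' 0 with h1 | h1 | h1
        · rcases lt_trichotomy a' 0 with h2 | h2 | h2
          · rw [if_neg (by nlinarith), if_pos (by nlinarith)]
          · exact absurd h2 ha'
          · rw [if_pos (by nlinarith), if_neg (by nlinarith)]
        · exact absurd h1 hb'
        · rcases lt_trichotomy a' 0 with h2 | h2 | h2
          · rw [if_pos (by nlinarith), if_neg (by nlinarith)]
          · exact absurd h2 ha'
          · rw [if_neg (by nlinarith), if_pos (by nlinarith)]

lemma adm_of_index : ∀ (n : ℕ) (l : List ℝ), l.length = n → ∀ (hne : 0 < l.length),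
    l[0] ≠ 0 → l[l.length - 1]'(by omega) ≠ 0 →
    (∀ i (hi : i + 1 < l.length), 0 < i → l[i] = 0 →
      l[i-1]'(by omega) * l[i+1] < 0) →
    Adm l := by
  intro n
  induction n using Nat.strong_induction_on with
  | _ n ih =>
    intro l hlen hne h0 hlast hmid
    match l with
    | [a] => exact Adm.single h0
    | a :: b :: t =>
      simp only [List.getElem_cons_zero] at h0
      by_cases hb : b = 0
      · subst hb
        match t with
        | [] => simp at hlast
        | c :: t₂ =>
          have hac : a * c < 0 := by
            have := hmid 1 (by simp) (by norm_num) (by simp)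
            simpa using this
          have hc : c ≠ 0 := by rintro rfl; simp at hac
          refine Adm.consZero h0 hac ?_
          refine ih (t₂.length + 1)
            (by simp only [List.length_cons] at hlen; omega) _ rfl (by simp) hc ?_ ?_
          · simpa [Nat.add_sub_cancel] using hlast
          · intro i hi hipos hz
            obtain ⟨j, rfl⟩ : ∃ j, i = j + 1 := ⟨i - 1, by omega⟩
            have h := hmid (j+3) (by simp at hi ⊢; omega) (by omega)
              (by simpa using hz)
            simpa using h
      · refine Adm.cons h0 hb ?_
        refine ih (t.length + 1)
          (by simp only [List.length_cons] at hlen; omega) _ rfl (by simp) hb ?_ ?_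
        · simpa [Nat.add_sub_cancel] using hlast
        · intro i hi hipos hz
          obtain ⟨j, rfl⟩ : ∃ j, i = j + 1 := ⟨i - 1, by omega⟩
          have h := hmid (j+2) (by simp at hi ⊢; omega) (by omega) (by simpa using hz)
          simpa using h
open Set Filter Topology

variable {a b : ℝ} {N : ℕ} {f : ℕ → ℝ → ℝ}

/-- sign preservation near any point. -/
lemma ev_signs (hS : IsSturmSequence a b N f) {y : ℝ} (hy : y ∈ Ioo a b) :
    ∀ᶠ x in 𝓝 y, ∀ i ≤ N, f i y ≠ 0 → 0 < f i y * f i x := by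
  have : ∀ᶠ x in 𝓝 y, ∀ i ∈ Finset.range (N+1), f i y ≠ 0 → 0 < f i y * f i x := by
    rw [eventually_all_finset]
    intro i hi
    by_cases hne : f i y = 0
    · exact Eventually.of_forall fun x h => absurd hne h
    · have hc : ContinuousAt (f i) y :=
        (hS.1 i (by simpa [Nat.lt_succ_iff] using hi)).continuousAt
          (Ioo_mem_nhds hy.1 hy.2)
      have ht : Tendsto (fun x => f i y * f i x) (𝓝 y) (𝓝 (f i y * f i y)) :=
        tendsto_const_nhds.mul hc
      have hpos : (0:ℝ) < f i y * f i y := mul_self_pos.mpr hne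
      filter_upwards [ht.eventually (eventually_gt_nhds hpos)] with x hx _ using hx
  filter_upwards [this] with x hx i hi
  exact hx i (Finset.mem_range.mpr (by omega))

lemma adm_at_point (hS : IsSturmSequence a b N f) {y : ℝ} (hy : y ∈ Ioo a b)
    (h0 : f 0 y ≠ 0) : Adm (List.ofFn fun i : Fin (N+1) => f i y) := by
  apply adm_of_index (N+1) _ (by simp) (by simp)
  · simpa using h0
  · simp only [List.length_ofFn, List.getElem_ofFn]
    exact hS.2.2.2 y hy
  · intro i hi hipos hz
    simp only [List.length_ofFn] at hi
    rw [List.getElem_ofFn] at hz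
    rw [List.getElem_ofFn, List.getElem_ofFn]
    exact hS.2.2.1 i (by omega) (by omega) y hy hz

lemma adm_tail (hS : IsSturmSequence a b (N+1) f) {y : ℝ} (hy : y ∈ Ioo a b)
    (h1 : f 1 y ≠ 0) : Adm (List.ofFn fun i : Fin (N+1) => f (i+1) y) := by
  apply adm_of_index (N+1) _ (by simp) (by simp)
  · simpa using h1
  · simp only [List.length_ofFn, List.getElem_ofFn]
    exact hS.2.2.2 y hy
  · intro i hi hipos hz
    simp only [List.length_ofFn] at hi
    rw [List.getElem_ofFn] at hz
    rw [List.getElem_ofFn, List.getElem_ofFn]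
    have h2 := hS.2.2.1 (i+1) (by omega) (by omega) y hy (by simpa using hz)
    simp only [Nat.add_sub_cancel] at h2
    show f (i-1+1) y * f (i+1+1) y < 0
    rw [show i - 1 + 1 = i by omega]
    exact h2

lemma eventually_const_of_ne (hS : IsSturmSequence a b N f) {y : ℝ} (hy : y ∈ Ioo a b)
    (h0 : f 0 y ≠ 0) :
    ∀ᶠ x in 𝓝 y, f 0 x ≠ 0 ∧
      signVar (List.ofFn fun i : Fin (N+1) => f i x) =
        signVar (List.ofFn fun i : Fin (N+1) => f i y) := by
  filter_upwards [ev_signs hS hy] with x hx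
  have h0x : f 0 x ≠ 0 := by
    intro h
    have := hx 0 (by omega) h0
    rw [h] at this; simp at this
  refine ⟨h0x, ?_⟩
  apply signVar_eq_of_adm (adm_at_point hS hy h0) (by simp)
  intro i hi hi' hne
  simp only [List.length_ofFn] at hi
  rw [List.getElem_ofFn] at hne ⊢
  rw [List.getElem_ofFn]
  exact hx i (by omega) hne

lemma ofFn_decomp (g : ℕ → ℝ) (M : ℕ) :
    (List.ofFn fun i : Fin (M+2) => g i) = g 0 :: g 1 :: List.ofFn (fun i : Fin M => g (i+2)) := by
  rw [List.ofFn_succ, List.ofFn_succ]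
  simp [Fin.val_succ]

lemma ofFn_decomp' (g : ℕ → ℝ) (M : ℕ) :
    (List.ofFn fun i : Fin (M+1) => g (i+1)) = g 1 :: List.ofFn (fun i : Fin M => g (i+2)) := by
  rw [List.ofFn_succ]
  simp [Fin.val_succ]

lemma exists_eps_of_zero (hS : IsSturmSequence a b N f) {y : ℝ} (hy : y ∈ Ioo a b)
    (h0 : f 0 y = 0) :
    ∃ ε > 0, (∀ x ∈ Ioo (y-ε) (y+ε), x ≠ y → f 0 x ≠ 0) ∧
      (∀ x ∈ Ioo (y-ε) y, signVar (List.ofFn fun i : Fin (N+1) => f i x) =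
        signVar (List.ofFn fun i : Fin (N+1) => f i y) + 1) ∧
      (∀ x ∈ Ioo y (y+ε), signVar (List.ofFn fun i : Fin (N+1) => f i x) =
        signVar (List.ofFn fun i : Fin (N+1) => f i y)) := by
  obtain ⟨M, rfl⟩ : ∃ M, N = M + 1 := by
    rcases N with _ | M
    · exact absurd h0 (hS.2.2.2 y hy)
    · exact ⟨M, rfl⟩
  have h1 : f 1 y ≠ 0 := by
    intro h1eq
    by_cases hM : M = 0
    · subst hM; exact hS.2.2.2 y hy h1eq
    · have := hS.2.2.1 1 le_rfl (by omega) y hy h1eq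
      rw [show (1:ℕ) - 1 = 0 from rfl, h0] at this
      simp at this
  obtain ⟨ε₀, hε₀, hsub, hne1, hleft, hright⟩ := hS.2.1 y hy h0
  obtain ⟨δ, hδ, hδs⟩ := Metric.eventually_nhds_iff.mp (ev_signs hS hy)
  have hadm : Adm (List.ofFn fun i : Fin (M+1) => f (i+1) y) := adm_tail hS hy h1
  have hy_eq : signVar (List.ofFn fun i : Fin (M+1+1) => f i y) =
      signVar (List.ofFn fun i : Fin (M+1) => f (i+1) y) := by
    rw [ofFn_decomp (fun i => f i y) M, ofFn_decomp' (fun i => f i y) M, h0, signVar_zero_cons]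
  have htail : ∀ x, dist x y < δ →
      signVar (List.ofFn fun i : Fin (M+1) => f (i+1) x) =
        signVar (List.ofFn fun i : Fin (M+1) => f (i+1) y) := by
    intro x hdist
    have hsg := hδs hdist
    apply signVar_eq_of_adm hadm (by simp)
    intro i hi hi' hne
    simp only [List.length_ofFn] at hi
    rw [List.getElem_ofFn] at hne ⊢
    rw [List.getElem_ofFn]
    exact hsg (↑(⟨i, hi⟩ : Fin (M+1)) + 1) (by omega) hne
  refine ⟨min ε₀ δ, by positivity, ?_, ?_, ?_⟩
  · intro x hx hxy
    obtain ⟨hx1, hx2⟩ := hx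
    have hl : y - ε₀ < x := by linarith [min_le_left ε₀ δ]
    have hr : x < y + ε₀ := by linarith [min_le_left ε₀ δ]
    rcases lt_or_gt_of_ne hxy with h | h
    · have := hleft x hl h
      intro hz; rw [hz] at this; simp at this
    · have := hright x h hr
      intro hz; rw [hz] at this; simp at this
  · rintro x ⟨hx1, hx2⟩
    have hdist : dist x y < δ := by
      rw [Real.dist_eq, abs_lt]
      constructor <;> linarith [min_le_right ε₀ δ, min_le_left ε₀ δ]
    have hprod : f 0 x * f 1 x < 0 := hleft x (by linarith [min_le_left ε₀ δ]) hx2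
    have hf0 : f 0 x ≠ 0 := fun hz => by rw [hz] at hprod; simp at hprod
    have hf1 : f 1 x ≠ 0 := fun hz => by rw [hz] at hprod; simp at hprod
    rw [ofFn_decomp (fun i => f i x) M, signVar_cons_cons hf0 hf1, if_pos hprod,
      ← ofFn_decomp' (fun i => f i x) M, htail x hdist, hy_eq, add_comm]
  · rintro x ⟨hx1, hx2⟩
    have hdist : dist x y < δ := by
      rw [Real.dist_eq, abs_lt]
      constructor <;> linarith [min_le_right ε₀ δ, min_le_left ε₀ δ]
    have hprod : 0 < f 0 x * f 1 x := hright x hx1 (by linarith [min_le_left ε₀ δ])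
    have hf0 : f 0 x ≠ 0 := fun hz => by rw [hz] at hprod; simp at hprod
    have hf1 : f 1 x ≠ 0 := fun hz => by rw [hz] at hprod; simp at hprod
    rw [ofFn_decomp (fun i => f i x) M, signVar_cons_cons hf0 hf1, if_neg (by linarith),
      ← ofFn_decomp' (fun i => f i x) M, htail x hdist, hy_eq]
    simp

theorem stmt_4 (a b : ℝ) (N : ℕ) (f : ℕ → ℝ → ℝ)
    (hS : IsSturmSequence a b N f)
    (c d : ℝ) (hac : a < c) (hcd : c < d) (hdb : d < b) :
    {x ∈ Set.Ioc c d | f 0 x = 0}.ncard =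
      signVar (List.ofFn fun i : Fin (N + 1) => f i c) -
        signVar (List.ofFn fun i : Fin (N + 1) => f i d) := by
  set V : ℝ → ℕ := fun x => signVar (List.ofFn fun i : Fin (N + 1) => f i x) with hV
  set Z : Set ℝ := {x ∈ Set.Ioc c d | f 0 x = 0} with hZ
  have hIccIoo : Set.Icc c d ⊆ Set.Ioo a b := fun t ht =>
    ⟨lt_of_lt_of_le hac ht.1, lt_of_le_of_lt ht.2 hdb⟩
  -- isolation of zeros
  have hiso : ∀ y ∈ Set.Icc c d, ∃ ε > 0, ∀ x ∈ Set.Ioo (y-ε) (y+ε), x ≠ y → f 0 x ≠ 0 := by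
    intro y hy
    by_cases h0 : f 0 y = 0
    · obtain ⟨ε, hε, hne, _, _⟩ := exists_eps_of_zero hS (hIccIoo hy) h0
      exact ⟨ε, hε, hne⟩
    · obtain ⟨δ, hδ, hδs⟩ :=
        Metric.eventually_nhds_iff.mp (eventually_const_of_ne hS (hIccIoo hy) h0)
      refine ⟨δ, hδ, fun x hx _ => (hδs ?_).1⟩
      rw [Real.dist_eq, abs_lt]
      obtain ⟨h1, h2⟩ := hx
      constructor <;> linarith
  -- finiteness of the zero set
  have hK : IsCompact {x ∈ Set.Icc c d | f 0 x = 0} := by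
    refine IsCompact.of_isClosed_subset isCompact_Icc ?_ (fun t ht => ht.1)
    have : {x ∈ Set.Icc c d | f 0 x = 0} = Set.Icc c d ∩ f 0 ⁻¹' {0} := by
      ext t; simp [Set.mem_sep_iff]
    rw [this]
    exact ContinuousOn.preimage_isClosed_of_isClosed
      ((hS.1 0 (Nat.zero_le N)).mono (fun t ht => hIccIoo ht)) isClosed_Icc isClosed_singleton
  have hZfin : Z.Finite := by
    have hsub : Z ⊆ {x ∈ Set.Icc c d | f 0 x = 0} := fun t ht =>
      ⟨⟨le_of_lt ht.1.1, ht.1.2⟩, ht.2⟩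
    by_contra hinf
    obtain ⟨y, hyK, hacc⟩ :=
      Set.Infinite.exists_accPt_of_subset_isCompact hinf hK hsub
    obtain ⟨ε, hε, hne⟩ := hiso y hyK.1
    have hfreq := accPt_iff_frequently.mp hacc
    have hev : ∀ᶠ x in 𝓝 y, ¬(x ≠ y ∧ x ∈ Z) := by
      filter_upwards [Ioo_mem_nhds (by linarith : y - ε < y) (by linarith : y < y + ε)]
        with x hx
      rintro ⟨hxy, hxZ⟩
      exact hne x hx hxy hxZ.2
    exact (hev.and_frequently hfreq).exists.elim (fun x hx => hx.1 hx.2)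
  -- the locally constant function
  set g : ℝ → ℕ := fun x => V x + (Z ∩ Set.Ioc c x).ncard with hg
  have hloc : ∀ y ∈ Set.Icc c d, ∀ᶠ x in 𝓝[Set.Icc c d] y, g x = g y := by
    intro y hy
    by_cases h0 : f 0 y = 0
    · obtain ⟨ε, hε, hne, hlft, hrgt⟩ := exists_eps_of_zero hS (hIccIoo hy) h0
      have hIoo : Set.Ioo (y-ε) (y+ε) ∈ 𝓝[Set.Icc c d] y :=
        nhdsWithin_le_nhds (Ioo_mem_nhds (by linarith) (by linarith))
      filter_upwards [hIoo, eventually_mem_nhdsWithin] with x hxIoo hxIcc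
      rcases lt_trichotomy x y with hlt | heq | hgt
      · -- x < y : V x = V y + 1, count y = count x + 1
        have hVx : V x = V y + 1 := hlft x ⟨hxIoo.1, hlt⟩
        have hyZ : y ∈ Z := ⟨⟨lt_of_le_of_lt hxIcc.1 hlt, hy.2⟩, h0⟩
        have hset : Z ∩ Set.Ioc c y = insert y (Z ∩ Set.Ioc c x) := by
          ext t
          constructor
          · rintro ⟨htZ, htc, hty⟩
            rcases eq_or_lt_of_le hty with h | h
            · exact Or.inl h
            · refine Or.inr ⟨htZ, htc, ?_⟩
              by_contra hxt
              push_neg at hxt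
              exact hne t ⟨by linarith [hxIoo.1], by linarith⟩ (by linarith) htZ.2
          · rintro (rfl | ⟨htZ, htc, htx⟩)
            · exact ⟨hyZ, lt_of_le_of_lt hxIcc.1 hlt, le_refl _⟩
            · exact ⟨htZ, htc, by linarith⟩
        have hcount : (Z ∩ Set.Ioc c y).ncard = (Z ∩ Set.Ioc c x).ncard + 1 := by
          rw [hset, Set.ncard_insert_of_notMem (fun h => absurd h.2.2 (by linarith))
            (hZfin.subset Set.inter_subset_left)]
        simp only [hg, hVx, hcount]
        omega
      · rw [heq]
      · -- x > y : V x = V y, counts equal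
        have hVx : V x = V y := hrgt x ⟨hgt, hxIoo.2⟩
        have hset : Z ∩ Set.Ioc c x = Z ∩ Set.Ioc c y := by
          ext t
          constructor
          · rintro ⟨htZ, htc, htx⟩
            refine ⟨htZ, htc, ?_⟩
            by_contra hyt
            push_neg at hyt
            exact hne t ⟨by linarith, by linarith [hxIoo.2]⟩ (by linarith) htZ.2
          · rintro ⟨htZ, htc, hty⟩
            exact ⟨htZ, htc, by linarith⟩
        simp only [hg, hVx, hset]
    · obtain ⟨δ, hδ, hδs⟩ :=
        Metric.eventually_nhds_iff.mp (eventually_const_of_ne hS (hIccIoo hy) h0)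
      have hIoo : Set.Ioo (y-δ) (y+δ) ∈ 𝓝[Set.Icc c d] y :=
        nhdsWithin_le_nhds (Ioo_mem_nhds (by linarith) (by linarith))
      filter_upwards [hIoo] with x hxIoo
      have hdx : dist x y < δ := by
        rw [Real.dist_eq, abs_lt]; obtain ⟨h1, h2⟩ := hxIoo; constructor <;> linarith
      have hVx : V x = V y := (hδs hdx).2
      have hset : Z ∩ Set.Ioc c x = Z ∩ Set.Ioc c y := by
        ext t
        have ht0 : t ∈ Z → ¬ (dist t y < δ) := by
          intro htZ hd
          exact (hδs hd).1 htZ.2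
        constructor
        · rintro ⟨htZ, htc, htx⟩
          refine ⟨htZ, htc, ?_⟩
          have := ht0 htZ
          rw [Real.dist_eq, abs_lt, not_and_or] at this
          push_neg at this
          rcases this with h | h
          · linarith
          · linarith [hxIoo.2]
        · rintro ⟨htZ, htc, hty⟩
          refine ⟨htZ, htc, ?_⟩
          have := ht0 htZ
          rw [Real.dist_eq, abs_lt, not_and_or] at this
          push_neg at this
          rcases this with h | h
          · linarith [hxIoo.1]
          · linarith
      simp only [hg, hVx, hset]
  -- conclude via connectedness
  have hcmem : c ∈ Set.Icc c d := ⟨le_refl c, le_of_lt hcd⟩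
  have hdmem : d ∈ Set.Icc c d := ⟨le_of_lt hcd, le_refl d⟩
  have : PreconnectedSpace (Set.Icc c d) := Subtype.preconnectedSpace isPreconnected_Icc
  have hlc : IsLocallyConstant (fun p : Set.Icc c d => g ↑p) := by
    rw [IsLocallyConstant.iff_eventually_eq]
    intro p
    have h1 := hloc ↑p p.2
    rw [← map_nhds_subtype_val] at h1
    exact Filter.eventually_map.mp h1
  have hcd_eq : g c = g d :=
    hlc.apply_eq_of_preconnectedSpace ⟨c, hcmem⟩ ⟨d, hdmem⟩
  have hZd : Z ∩ Set.Ioc c d = Z := by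
    apply Set.inter_eq_self_of_subset_left
    exact fun t ht => ht.1
  have hZc : Z ∩ Set.Ioc c c = ∅ := by
    simp [Set.Ioc_self]
  simp only [hg, hZc, hZd, Set.ncard_empty, add_zero] at hcd_eq
  have h1 : signVar (List.ofFn fun i : Fin (N + 1) => f i c) = V c := rfl
  have h2 : signVar (List.ofFn fun i : Fin (N + 1) => f i d) = V d := rfl
  rw [h1, h2]
  omega
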